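/- Let p ≥ 5 be a prime and n ≥ 1 an integer with p not dividing n+1. Then sl_{n+1}(ZMod p) is a simple Lie algebra over the field ZMod p: it is non-abelian and its only Lie ideals are 0 and the whole algebra. -/

import Mathlib

open Matrix LieAlgebra LieAlgebra.SpecialLinear

section MatrixLemmas

variable {K : Type*} [Field K] {m : Type*} [Fintype m] [DecidableEq m]

lemma EmulE (i j k l : m) :
    Matrix.single i j (1:K) * Matrix.single k l 1 =
      if j = k then Matrix.single i l 1 else 0 := by
  split
  · next h => subst h; rw [Matrix.single_mul_single_same, one_mul]
  · next h => exact Matrix.single_mul_single_of_ne (1:K) i j _ h 1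

lemma sandwich (i j : m) (M : Matrix m m K) :
    Matrix.single i j 1 * M * Matrix.single i j 1 = M j i • Matrix.single i j 1 := by
  ext a b
  by_cases hb : b = j
  · by_cases ha : a = i
    · simp [ha, hb]
    · have hz : Matrix.single i j (1:K) a j = 0 := by
        apply Matrix.single_apply_of_ne; tauto
      simp [ha, hb, hz]
  · have hz : Matrix.single i j (1:K) a b = 0 := by
      apply Matrix.single_apply_of_ne; tauto
    simp [hb, hz]

lemma ad_ad (i j : m) (hji : j ≠ i) (M : Matrix m m K) :
    ⁅Matrix.single i j (1:K), ⁅Matrix.single i j (1:K), M⁆⁆ =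
      (-(2:K) * M j i) • Matrix.single i j 1 := by
  have hE2 : Matrix.single i j (1:K) * Matrix.single i j 1 = 0 :=
    Matrix.single_mul_single_of_ne (1:K) i j _ hji 1
  rw [Ring.lie_def, Ring.lie_def, mul_sub, sub_mul, ← mul_assoc, hE2, zero_mul,
    ← mul_assoc, mul_assoc M, hE2, mul_zero, sub_zero, sandwich, zero_sub]
  module

lemma diag_lie (M : Matrix m m K) (hd : ∀ a b, a ≠ b → M a b = 0) (i j : m) (hij : i ≠ j) :
    ⁅M, Matrix.single i j (1:K)⁆ = (M i i - M j j) • Matrix.single i j 1 := by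
  ext a b
  rw [Ring.lie_def]
  by_cases ha : a = i <;> by_cases hb : b = j
  · simp [ha, hb, hd j i (Ne.symm hij)]
  · have hz : Matrix.single i j (1:K) i b = 0 := by
      apply Matrix.single_apply_of_ne; tauto
    simp [ha, hb, hd j b (fun h : j = b => hb h.symm), hz]
  · have hz : Matrix.single i j (1:K) a j = 0 := by
      apply Matrix.single_apply_of_ne; tauto
    simp [ha, hb, hd a i ha, hz]
  · have hz : Matrix.single i j (1:K) a b = 0 := by
      apply Matrix.single_apply_of_ne; tauto
    simp [ha, hb, hz]

end MatrixLemmas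

/-- the elementary matrix `E_{ij}` as an element of `sl`. -/
def Eb (R : Type*) [CommRing R] {n : Type*} [DecidableEq n] [Fintype n] (i j : n)
    (h : j ≠ i) : sl n R :=
  ⟨Matrix.single i j 1, LinearMap.mem_ker.mpr (Matrix.trace_single_eq_of_ne i j 1 (Ne.symm h))⟩

lemma eb_val (R : Type*) [CommRing R] {n : Type*} [DecidableEq n] [Fintype n] (i j : n)
    (h : j ≠ i) : (Eb R i j h).val = Matrix.single i j 1 := rfl

section SlLemmas

variable {K : Type*} [Field K] {m : Type*} [Fintype m] [DecidableEq m]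

lemma coe_lie (A B : sl m K) :
    (↑⁅A, B⁆ : Matrix m m K) = ⁅(A : Matrix m m K), (B : Matrix m m K)⁆ := by
  rw [sl_bracket, Ring.lie_def]

lemma coe_smul' (c : K) (A : sl m K) :
    ((c • A : sl m K) : Matrix m m K) = c • (A : Matrix m m K) := rfl

variable (I : LieIdeal K (sl m K))

lemma helperL {a b c : m} (hba : b ≠ a) (hbc : b ≠ c) (hca : c ≠ a)
    (h : Eb K a b hba ∈ I) : Eb K c b hbc ∈ I := by
  have key : Eb K c b hbc = ⁅Eb K c a (Ne.symm hca), Eb K a b hba⁆ := by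
    apply Subtype.ext
    rw [coe_lie, Ring.lie_def, eb_val, eb_val, eb_val, EmulE, EmulE]
    simp [hbc]
  rw [key]
  exact lie_mem_right _ _ I _ _ h

lemma helperR {a b c : m} (hba : b ≠ a) (hcb : c ≠ b) (hca : c ≠ a)
    (h : Eb K a b hba ∈ I) : Eb K a c hca ∈ I := by
  have key : Eb K a c hca = ⁅Eb K a b hba, Eb K b c hcb⁆ := by
    apply Subtype.ext
    rw [coe_lie, Ring.lie_def, eb_val, eb_val, eb_val, EmulE, EmulE]
    simp [hca]
  rw [key]
  exact lie_mem_left _ _ I _ _ h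

lemma swap {i j : m} (hji : j ≠ i) (h2 : (2:K) ≠ 0)
    (h : Eb K i j hji ∈ I) : Eb K j i (Ne.symm hji) ∈ I := by
  have hy : (⁅Eb K j i (Ne.symm hji), ⁅Eb K j i (Ne.symm hji), Eb K i j hji⁆⁆ : sl m K) ∈ I :=
    lie_mem_right _ _ I _ _ (lie_mem_right _ _ I _ _ h)
  have key : Eb K j i (Ne.symm hji) =
      (-(2:K))⁻¹ • ⁅Eb K j i (Ne.symm hji), ⁅Eb K j i (Ne.symm hji), Eb K i j hji⁆⁆ := by
    apply Subtype.ext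
    rw [coe_smul', coe_lie, coe_lie, eb_val, eb_val, ad_ad j i (Ne.symm hji),
      Matrix.single_apply_same, smul_smul, mul_one,
      inv_mul_cancel₀ (neg_ne_zero.mpr h2), one_smul]
  rw [key]
  exact SMulMemClass.smul_mem _ hy

lemma all_mem (h2 : (2:K) ≠ 0) {i j : m} (hji : j ≠ i) (h : Eb K i j hji ∈ I) :
    ∀ k l (hlk : l ≠ k), Eb K k l hlk ∈ I := by
  intro k l hlk
  by_cases hki : k = i
  · subst hki
    by_cases hlj : l = j
    · subst hlj; exact h
    · exact helperR I hji hlj hlk h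
  · by_cases hkj : k = j
    · subst hkj
      by_cases hli : l = i
      · subst hli; exact swap I hji h2 h
      · exact helperR I (Ne.symm hji) hli hlk (swap I hji h2 h)
    · by_cases hli : l = i
      · subst hli
        exact helperL I (Ne.symm hji) (fun e => hki e.symm) hkj (swap I hji h2 h)
      · by_cases hlj : l = j
        · subst hlj
          exact helperL I hji (fun e => hkj e.symm) hki h
        · exact helperL I hli hlk hki (helperR I hji hlj hli h)

end SlLemmas

section StepA

variable {K : Type*} [Field K] {m : Type*} [Fintype m] [DecidableEq m] [Nonempty m]

lemma exists_eb (I : LieIdeal K (sl m K)) (h2 : (2:K) ≠ 0)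
    (hcard : (Fintype.card m : K) ≠ 0) (x : sl m K) (hxI : x ∈ I) (hx0 : x ≠ 0) :
    ∃ i j, ∃ hji : j ≠ i, Eb K i j hji ∈ I := by
  by_cases hoff : ∃ i j, j ≠ i ∧ (x : Matrix m m K) j i ≠ 0
  · obtain ⟨i, j, hji, hv⟩ := hoff
    refine ⟨i, j, hji, ?_⟩
    have hy : ⁅Eb K i j hji, ⁅Eb K i j hji, x⁆⁆ ∈ I :=
      lie_mem_right _ _ I _ _ (lie_mem_right _ _ I _ _ hxI)
    have key : Eb K i j hji =
        (-(2:K) * (x : Matrix m m K) j i)⁻¹ • ⁅Eb K i j hji, ⁅Eb K i j hji, x⁆⁆ := by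
      apply Subtype.ext
      rw [coe_smul', coe_lie, coe_lie, eb_val, ad_ad i j hji, smul_smul,
        inv_mul_cancel₀ (mul_ne_zero (neg_ne_zero.mpr h2) hv), one_smul]
    rw [key]
    exact SMulMemClass.smul_mem _ hy
  · push_neg at hoff
    have hdiag : ∀ a b, a ≠ b → (x : Matrix m m K) a b = 0 := fun a b hab => hoff b a hab
    have hne : ∃ i j, i ≠ j ∧ (x : Matrix m m K) i i ≠ (x : Matrix m m K) j j := by
      by_contra hcon
      push_neg at hcon
      apply hx0
      obtain ⟨i0⟩ := ‹Nonempty m›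
      have hall : ∀ i, (x : Matrix m m K) i i = (x : Matrix m m K) i0 i0 := by
        intro i
        by_cases h : i = i0
        · rw [h]
        · exact hcon i i0 h
      have htr : ∑ i, (x : Matrix m m K) i i = 0 := x.2
      have hsum : ∑ i, (x : Matrix m m K) i i =
          (Fintype.card m : K) * (x : Matrix m m K) i0 i0 := by
        rw [Finset.sum_congr rfl (fun i _ => hall i), Finset.sum_const, Finset.card_univ,
          nsmul_eq_mul]
      have hz : (x : Matrix m m K) i0 i0 = 0 := by
        have := htr
        rw [hsum] at this
        exact (mul_eq_zero.mp this).resolve_left hcard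
      apply Subtype.ext
      ext a b
      by_cases hab : a = b
      · subst hab
        rw [hall a, hz]
        rfl
      · rw [hdiag a b hab]
        rfl
    obtain ⟨i, j, hij, hv⟩ := hne
    refine ⟨i, j, Ne.symm hij, ?_⟩
    have hy : ⁅x, Eb K i j (Ne.symm hij)⁆ ∈ I := lie_mem_left _ _ I _ _ hxI
    have key : Eb K i j (Ne.symm hij) =
        ((x : Matrix m m K) i i - (x : Matrix m m K) j j)⁻¹ • ⁅x, Eb K i j (Ne.symm hij)⁆ := by
      apply Subtype.ext
      rw [coe_smul', coe_lie, eb_val, diag_lie _ hdiag i j hij, smul_smul,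
        inv_mul_cancel₀ (sub_ne_zero.mpr hv), one_smul]
    rw [key]
    exact SMulMemClass.smul_mem _ hy

end StepA

section Span

variable {K : Type*} [Field K] {N : ℕ}

/-- diagonal generator `E_{ii} - E_{00}` of `sl`. -/
def dg (K : Type*) [Field K] {N : ℕ} (i : Fin (N+1)) : sl (Fin (N+1)) K :=
  ⟨Matrix.single i i 1 - Matrix.single 0 0 1, by
    show _ ∈ LinearMap.ker (Matrix.traceLinearMap _ K K)
    rw [LinearMap.mem_ker, map_sub]
    simp⟩

lemma dg_mem (I : LieIdeal K (sl (Fin (N+1)) K))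
    (hall : ∀ k l (h : l ≠ k), Eb K k l h ∈ I) (i : Fin (N+1)) : dg K i ∈ I := by
  by_cases h0 : i = 0
  · have : dg K i = 0 := by
      apply Subtype.ext
      show Matrix.single i i 1 - Matrix.single 0 0 1 = 0
      rw [h0, sub_self]
    rw [this]
    exact zero_mem I
  · have key : dg K i = ⁅Eb K i 0 (Ne.symm h0), Eb K 0 i h0⁆ := by
      apply Subtype.ext
      rw [coe_lie, Ring.lie_def, eb_val, eb_val, EmulE, EmulE]
      simp [dg]
    rw [key]
    exact lie_mem_right _ _ I _ _ (hall 0 i h0)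

lemma ideal_top (I : LieIdeal K (sl (Fin (N+1)) K))
    (hall : ∀ k l (h : l ≠ k), Eb K k l h ∈ I) : I = ⊤ := by
  rw [eq_top_iff]
  intro x _
  have htr : ∑ i : Fin (N+1), (x : Matrix (Fin (N+1)) (Fin (N+1)) K) i i = 0 := x.2
  have hx : x = ∑ i : Fin (N+1), ∑ j : Fin (N+1),
      (if h : j = i then ((x : Matrix _ _ K) i i) • dg K i
        else ((x : Matrix _ _ K) i j) • Eb K i j h) := by
    apply Subtype.ext
    simp only [AddSubmonoidClass.coe_finset_sum]
    have hterm : ∀ i j : Fin (N+1),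
        ((if h : j = i then ((x : Matrix _ _ K) i i) • dg K i
          else ((x : Matrix _ _ K) i j) • Eb K i j h : sl (Fin (N+1)) K) : Matrix _ _ K) =
        Matrix.single i j ((x : Matrix _ _ K) i j) -
          (if j = i then ((x : Matrix _ _ K) i i) • Matrix.single 0 0 1 else 0) := by
      intro i j
      split
      · next h =>
        subst h
        rw [coe_smul']
        show (x : Matrix _ _ K) j j • (Matrix.single j j 1 - Matrix.single 0 0 1) = _
        rw [smul_sub, smul_single, smul_eq_mul, mul_one]
      · next h =>
        rw [coe_smul', eb_val, smul_single, smul_eq_mul, mul_one, sub_zero]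
    have step1 : ∀ i : Fin (N+1), ∑ j : Fin (N+1),
        ((if h : j = i then ((x : Matrix _ _ K) i i) • dg K i
          else ((x : Matrix _ _ K) i j) • Eb K i j h : sl (Fin (N+1)) K) : Matrix _ _ K) =
        (∑ j : Fin (N+1), Matrix.single i j ((x : Matrix _ _ K) i j)) -
          ((x : Matrix _ _ K) i i) • Matrix.single 0 0 1 := by
      intro i
      rw [Finset.sum_congr rfl (fun j _ => hterm i j), Finset.sum_sub_distrib]
      congr 1
      rw [Finset.sum_ite_eq' Finset.univ i
        (fun _ => ((x : Matrix _ _ K) i i) • Matrix.single 0 0 1)]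
      simp
    rw [Finset.sum_congr rfl (fun i _ => step1 i), Finset.sum_sub_distrib,
      ← Finset.sum_smul, htr, zero_smul, sub_zero]
    exact matrix_eq_sum_single _
  rw [hx]
  refine sum_mem fun i _ => sum_mem fun j _ => ?_
  split
  · exact SMulMemClass.smul_mem _ (dg_mem I hall i)
  · exact SMulMemClass.smul_mem _ (hall i j _)

end Span

/-- for a nice prime `p` for `A_n` (`p ≥ 5` and `p ∤ n+1`),
the special linear Lie algebra `sl_{n+1}(𝔽_p)` is a simple Lie algebra:
it is non-abelian and its only Lie ideals are `0` and the whole algebra. -/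
theorem stmt12 (p n : ℕ) [Fact p.Prime] (hp5 : 5 ≤ p) (hn : 1 ≤ n)
    (hpn : ¬ p ∣ (n + 1)) :
    LieAlgebra.IsSimple (ZMod p)
      (LieAlgebra.SpecialLinear.sl (Fin (n + 1)) (ZMod p)) := by
  have h2 : (2 : ZMod p) ≠ 0 := by
    have h2' : ((2:ℕ) : ZMod p) ≠ 0 := by
      rw [Ne, ZMod.natCast_eq_zero_iff]
      intro hdvd
      have := Nat.le_of_dvd (by norm_num) hdvd
      omega
    simpa using h2'
  have hcard : ((Fintype.card (Fin (n+1)) : ℕ) : ZMod p) ≠ 0 := by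
    rw [Fintype.card_fin, Ne, ZMod.natCast_eq_zero_iff]
    exact hpn
  constructor
  · intro I
    by_cases hI : I = ⊥
    · left; exact hI
    · right
      rw [LieSubmodule.eq_bot_iff] at hI
      push_neg at hI
      obtain ⟨x, hxI, hx0⟩ := hI
      obtain ⟨i, j, hji, hEb⟩ := exists_eb I h2 hcard x hxI hx0
      exact ideal_top I (all_mem I h2 hji hEb)
  · apply sl_non_abelian
    rw [Fintype.card_fin]
    omega
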